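/- Let c : ℝ → S be a path in a Riemannian surface S contained in a single leaf of a singular foliation, parameterized by arc-length, and let z = c(0). Then for every x ∈ ℝ there exists an isotopy f^x : S → S, depending continuously on x, with f⁰ = id, f^x(z) = c(x), and each f^x preserving the foliation, constructed by covering the compact arc c([0,x]) by finitely many foliated balls and composing flows of unit vector fields tangent to the foliation supported in those balls. -/

import Mathlib

open Set

private lemma leaf_chain {S : Type*} (leaf : S → Set S)
    (hpart : ∀ p q : S, q ∈ leaf p → leaf q = leaf p)
    {p q r : S} (h1 : q ∈ leaf p) (h2 : r ∈ leaf q) : r ∈ leaf p := by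
  rw [hpart p q h1] at h2; exact h2

private lemma symm_leaf {S : Type*} [TopologicalSpace S] (leaf : S → Set S)
    (hpart : ∀ p q : S, q ∈ leaf p → leaf q = leaf p)
    (hmem : ∀ p : S, p ∈ leaf p)
    (E : S ≃ₜ S) (hE : ∀ p : S, E p ∈ leaf p) (p : S) : E.symm p ∈ leaf p := by
  have h : E (E.symm p) ∈ leaf (E.symm p) := hE _
  rw [E.apply_symm_apply] at h
  rw [hpart _ _ h]
  exact hmem _

private lemma interval_push {S : Type*} [TopologicalSpace S] (leaf : S → Set S)
    (hpart : ∀ p q : S, q ∈ leaf p → leaf q = leaf p)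
    (hmem : ∀ p : S, p ∈ leaf p)
    (c : ℝ → S)
    (loc : ∀ x₀ : ℝ, ∃ δ > (0 : ℝ), ∃ g : ℝ → S → S,
      Continuous (fun a : ℝ × S => g a.1 a.2) ∧
      g 0 = id ∧
      (∀ s : ℝ, IsHomeomorph (g s)) ∧
      (∀ s : ℝ, |s| ≤ δ → g s (c x₀) = c (x₀ + s)) ∧
      (∀ (s : ℝ) (p : S), g s p ∈ leaf p))
    (a b : ℝ) (hab : a ≤ b) :
    ∃ h : ℝ → S → S,
      Continuous (fun q : ℝ × S => h q.1 q.2) ∧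
      (∀ x ≤ a, h x = id) ∧
      (∀ x ≥ b, h x = h b) ∧
      (∀ x, IsHomeomorph (h x)) ∧
      (∀ x ∈ Icc a b, h x (c a) = c x) ∧
      (∀ (x : ℝ) (p : S), h x p ∈ leaf p) := by
  set A : Set ℝ := {t | t ∈ Icc a b ∧ ∃ h : ℝ → S → S,
      Continuous (fun q : ℝ × S => h q.1 q.2) ∧
      (∀ x ≤ a, h x = id) ∧
      (∀ x ≥ t, h x = h t) ∧
      (∀ x, IsHomeomorph (h x)) ∧
      (∀ x ∈ Icc a t, h x (c a) = c x) ∧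
      (∀ (x : ℝ) (p : S), h x p ∈ leaf p)} with hA
  have hAa : a ∈ A := by
    refine ⟨⟨le_refl a, hab⟩, fun _ => id, continuous_snd, fun _ _ => rfl, fun _ _ => rfl,
      fun x => IsHomeomorph.id, ?_, fun x p => hmem p⟩
    rintro x ⟨h1, h2⟩
    have hxa : x = a := le_antisymm h2 h1
    rw [hxa]; rfl
  have hbdd : BddAbove A := ⟨b, fun t ht => ht.1.2⟩
  have hne : A.Nonempty := ⟨a, hAa⟩
  set s := sSup A with hs
  have has : a ≤ s := le_csSup hbdd hAa
  have hsb : s ≤ b := csSup_le hne (fun t ht => ht.1.2)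
  obtain ⟨δ, hδ, g, hgc, hg0, hgh, hgp, hgl⟩ := loc s
  obtain ⟨t, htA, hts⟩ := exists_lt_of_lt_csSup hne (show s - δ < s by linarith)
  have htle : t ≤ s := le_csSup hbdd htA
  have hat : a ≤ t := htA.1.1
  obtain ⟨h, hc1, hc2, hc3, hc4, hc5, hc6⟩ := htA.2
  obtain ⟨E, hE⟩ := isHomeomorph_iff_exists_homeomorph.mp (hgh (t - s))
  set s' := min b (s + δ) with hs'
  have hss' : s ≤ s' := le_min hsb (by linarith)
  have hs'b : s' ≤ b := min_le_left _ _
  have hs'd : s' - s ≤ δ := by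
    have := min_le_right b (s + δ); linarith
  have hEleaf : ∀ p : S, E p ∈ leaf p := by
    intro p; have := hgl (t - s) p; rw [hE]; exact this
  have hP : s' ∈ A := by
    refine ⟨⟨le_trans has hss', hs'b⟩,
      fun x p => g (max (t - s) (min (x - s) (s' - s))) (E.symm (h x p)),
      ?_, ?_, ?_, ?_, ?_, ?_⟩
    · exact hgc.comp
        (((continuous_const.max ((continuous_fst.sub continuous_const).min
          continuous_const))).prodMk (E.symm.continuous.comp hc1))
    · intro x hx
      funext p
      have h1 : max (t - s) (min (x - s) (s' - s)) = t - s := by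
        rw [min_eq_left (by linarith : x - s ≤ s' - s)]
        exact max_eq_left (by linarith)
      show g (max (t - s) (min (x - s) (s' - s))) (E.symm (h x p)) = id p
      rw [h1, hc2 x hx]
      show g (t - s) (E.symm (id p)) = id p
      rw [← hE]
      exact E.apply_symm_apply p
    · intro x hx
      funext p
      have h1 : max (t - s) (min (x - s) (s' - s)) = s' - s := by
        rw [min_eq_right (by linarith : s' - s ≤ x - s)]
        exact max_eq_right (by linarith)
      have h2 : max (t - s) (min (s' - s) (s' - s)) = s' - s := by
        rw [min_self]; exact max_eq_right (by linarith)
      show g (max (t - s) (min (x - s) (s' - s))) (E.symm (h x p))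
        = g (max (t - s) (min (s' - s) (s' - s))) (E.symm (h s' p))
      rw [h1, h2, hc3 x (by linarith), hc3 s' (by linarith)]
    · intro x
      exact (hgh _).comp (E.symm.isHomeomorph.comp (hc4 x))
    · intro x hx
      rcases le_total x t with hxt | hxt
      · have h1 : max (t - s) (min (x - s) (s' - s)) = t - s := by
          rw [min_eq_left (by linarith [hx.2] : x - s ≤ s' - s)]
          exact max_eq_left (by linarith)
        show g (max (t - s) (min (x - s) (s' - s))) (E.symm (h x (c a))) = c x
        rw [h1, hc5 x ⟨hx.1, hxt⟩, ← hE]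
        exact E.apply_symm_apply _
      · have h1 : max (t - s) (min (x - s) (s' - s)) = x - s := by
          rw [min_eq_left (by linarith [hx.2] : x - s ≤ s' - s)]
          exact max_eq_right (by linarith)
        have h4 : E.symm (c t) = c s := by
          have h5 := hgp (t - s) (abs_le.mpr ⟨by linarith, by linarith⟩)
          rw [show s + (t - s) = t by ring] at h5
          rw [← h5, ← hE, E.symm_apply_apply]
        show g (max (t - s) (min (x - s) (s' - s))) (E.symm (h x (c a))) = c x
        rw [h1, hc3 x hxt, hc5 t ⟨hat, le_refl t⟩, h4]
        have h6 := hgp (x - s) (abs_le.mpr ⟨by linarith, by linarith [hx.2]⟩)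
        rw [show s + (x - s) = x by ring] at h6
        exact h6
    · intro x p
      exact leaf_chain leaf hpart (hc6 x p)
        (leaf_chain leaf hpart (symm_leaf leaf hpart hmem E hEleaf _) (hgl _ _))
  have hs's : s' ≤ s := le_csSup hbdd hP
  have hseq : s' = s := le_antisymm hs's hss'
  have hsb' : s = b := by
    rcases min_choice b (s + δ) with hm | hm
    · rw [← hseq, hs', hm]
    · exfalso; rw [hs', hm] at hseq; linarith
  rw [hseq, hsb'] at hP
  exact hP.2

private noncomputable def chainPos {S : Type*} [TopologicalSpace S] (e : ℤ → S ≃ₜ S) : ℕ → S ≃ₜ S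
  | 0 => Homeomorph.refl S
  | k+1 => (chainPos e k).trans (e (k : ℤ))

private noncomputable def chainNeg {S : Type*} [TopologicalSpace S] (e : ℤ → S ≃ₜ S) : ℕ → S ≃ₜ S
  | 0 => Homeomorph.refl S
  | k+1 => (chainNeg e k).trans (e (-(k+1) : ℤ)).symm

private noncomputable def chainAux {S : Type*} [TopologicalSpace S] (e : ℤ → S ≃ₜ S) : ℤ → S ≃ₜ S
  | Int.ofNat k => chainPos e k
  | Int.negSucc k => chainNeg e (k+1)

private lemma chainAux_zero {S : Type*} [TopologicalSpace S] (e : ℤ → S ≃ₜ S) :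
    chainAux e 0 = Homeomorph.refl S := rfl

private lemma chainAux_succ {S : Type*} [TopologicalSpace S] (e : ℤ → S ≃ₜ S) (n : ℤ) :
    chainAux e (n + 1) = (chainAux e n).trans (e n) := by
  cases n with
  | ofNat k => rfl
  | negSucc k =>
    cases k with
    | zero =>
      show chainAux e 0 = (chainNeg e 1).trans (e (Int.negSucc 0))
      rw [chainAux_zero]
      ext p
      simp [chainNeg, Int.negSucc_eq]
    | succ k =>
      show chainNeg e (k+1) = (chainNeg e (k+2)).trans (e (Int.negSucc (k+1)))
      ext p
      simp [chainNeg]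
      rw [show (-1 + (-1 + -(k:ℤ))) = Int.negSucc (k+1) by rw [Int.negSucc_eq]; push_cast; ring]
      simp

/-- point-pushing isotopy along a leaf: given a foliated surface
(abstracted as a space `S` partitioned into leaves), a leaf-wise path `c` with
`c 0 = z`, and local pushing isotopies near each parameter (coming from flows of unit
vector fields tangent to the foliation supported in foliated balls), there is a global
isotopy `f^x` with `f⁰ = id`, `f^x z = c x`, depending continuously on `x`, each `f^x`
a homeomorphism preserving the foliation (each point stays in its leaf). -/
theorem point_pushing_isotopy {S : Type*} [TopologicalSpace S]
    (leaf : S → Set S)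
    (hpart : ∀ p q : S, q ∈ leaf p → leaf q = leaf p)
    (hmem : ∀ p : S, p ∈ leaf p)
    (c : ℝ → S) (hc : Continuous c) (hcl : ∀ x : ℝ, c x ∈ leaf (c 0))
    (z : S) (hz : z = c 0)
    -- local pushing isotopies from flows in foliated balls
    (loc : ∀ x₀ : ℝ, ∃ δ > (0 : ℝ), ∃ g : ℝ → S → S,
      Continuous (fun a : ℝ × S => g a.1 a.2) ∧
      g 0 = id ∧
      (∀ s : ℝ, IsHomeomorph (g s)) ∧
      (∀ s : ℝ, |s| ≤ δ → g s (c x₀) = c (x₀ + s)) ∧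
      (∀ (s : ℝ) (p : S), g s p ∈ leaf p)) :
    ∃ f : ℝ → S → S,
      Continuous (fun a : ℝ × S => f a.1 a.2) ∧
      f 0 = id ∧
      (∀ x : ℝ, IsHomeomorph (f x)) ∧
      (∀ x : ℝ, f x z = c x) ∧
      (∀ (x : ℝ) (p : S), f x p ∈ leaf p) := by
  choose H H1 H2 H3 H4 H5 H6 using
    fun n : ℤ => interval_push leaf hpart hmem c loc (n : ℝ) ((n : ℝ) + 1) (by linarith)
  -- H1 : continuity, H2 : left clamp (id), H3 : right clamp, H4 : homeo, H5 : push, H6 : leaf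
  have he' : ∀ n : ℤ, ∃ E : S ≃ₜ S, ⇑E = H n ((n : ℝ) + 1) :=
    fun n => isHomeomorph_iff_exists_homeomorph.mp (H4 n _)
  choose e he using he'
  set G : ℤ → S ≃ₜ S := chainAux e with hGdef
  have hG0 : G 0 = Homeomorph.refl S := chainAux_zero e
  have hGrec : ∀ n : ℤ, G (n + 1) = (G n).trans (e n) := chainAux_succ e
  -- the chain hits the right points
  have Gz : ∀ n : ℤ, G n z = c (n : ℝ) := by
    intro n
    induction n using Int.induction_on with
    | zero => rw [hG0]; simpa using hz
    | succ k ih =>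
      rw [hGrec, Homeomorph.trans_apply, ih, he]
      have h5 := H5 (k : ℤ) (((k : ℤ) : ℝ) + 1) ⟨by linarith, le_refl _⟩
      push_cast at h5 ⊢
      exact h5
    | pred k ih =>
      have hrec := hGrec (-(k : ℤ) - 1)
      rw [show (-(k : ℤ) - 1) + 1 = -(k : ℤ) by ring] at hrec
      have h1 : (e (-(k : ℤ) - 1)) (G (-(k : ℤ) - 1) z) = c ((-(k : ℤ) : ℤ) : ℝ) := by
        rw [← Homeomorph.trans_apply, ← hrec]; exact ih
      have h2 : (e (-(k : ℤ) - 1)) (c ((-(k : ℤ) - 1 : ℤ) : ℝ)) = c ((-(k : ℤ) : ℤ) : ℝ) := by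
        rw [he]
        have h5 := H5 (-(k : ℤ) - 1) (((-(k : ℤ) - 1 : ℤ) : ℝ) + 1) ⟨by linarith, le_refl _⟩
        push_cast at h5 ⊢
        rw [show -(k : ℝ) - 1 + 1 = -(k : ℝ) by ring] at h5 ⊢
        exact h5
      exact (e (-(k : ℤ) - 1)).injective (h1.trans h2.symm)
  have Gleaf : ∀ (n : ℤ) (p : S), G n p ∈ leaf p := by
    intro n
    induction n using Int.induction_on with
    | zero => intro p; rw [hG0]; exact hmem p
    | succ k ih =>
      intro p
      rw [hGrec, Homeomorph.trans_apply]
      refine leaf_chain leaf hpart (ih p) ?_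
      rw [he]
      exact H6 k _ _
    | pred k ih =>
      intro p
      have hrec := hGrec (-(k : ℤ) - 1)
      rw [show (-(k : ℤ) - 1) + 1 = -(k : ℤ) by ring] at hrec
      have hsy : G (-(k : ℤ) - 1) = (G (-(k : ℤ))).trans (e (-(k : ℤ) - 1)).symm := by
        rw [hrec]; ext q; simp
      rw [hsy, Homeomorph.trans_apply]
      refine leaf_chain leaf hpart (ih p) ?_
      refine symm_leaf leaf hpart hmem _ ?_ _
      intro q
      rw [he]
      exact H6 _ _ _
  refine ⟨fun x p => H ⌊x⌋ x (G ⌊x⌋ p), ?_, ?_, ?_, ?_, ?_⟩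
  · -- continuity
    rw [continuous_iff_continuousAt]
    rintro ⟨x₀, p₀⟩
    set n := ⌊x₀⌋ with hn
    have hΦ : Continuous (fun q : ℝ × S => H n q.1 (H (n - 1) q.1 (G (n - 1) q.2))) :=
      (H1 n).comp (continuous_fst.prodMk
        ((H1 (n - 1)).comp (continuous_fst.prodMk
          ((G (n - 1)).continuous.comp continuous_snd))))
    have hopen : IsOpen ((Set.Ioo ((n : ℝ) - 1) ((n : ℝ) + 1)) ×ˢ (Set.univ : Set S)) :=
      isOpen_Ioo.prod isOpen_univ
    have hmemU : (x₀, p₀) ∈ (Set.Ioo ((n : ℝ) - 1) ((n : ℝ) + 1)) ×ˢ (Set.univ : Set S) := by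
      refine ⟨⟨?_, ?_⟩, trivial⟩
      · have := Int.floor_le x₀; rw [← hn] at this; linarith
      · have := Int.lt_floor_add_one x₀; rw [← hn] at this; linarith
    have hagree : ∀ q ∈ (Set.Ioo ((n : ℝ) - 1) ((n : ℝ) + 1)) ×ˢ (Set.univ : Set S),
        (fun q : ℝ × S => H ⌊q.1⌋ q.1 (G ⌊q.1⌋ q.2)) q
          = (fun q : ℝ × S => H n q.1 (H (n - 1) q.1 (G (n - 1) q.2))) q := by
      rintro ⟨x, p⟩ ⟨hx, -⟩
      rcases lt_or_ge x (n : ℝ) with hxn | hxn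
      · have hfl : ⌊x⌋ = n - 1 := by
          rw [Int.floor_eq_iff]
          constructor
          · push_cast; linarith [hx.1]
          · push_cast; linarith
        show H ⌊x⌋ x (G ⌊x⌋ p) = H n x (H (n - 1) x (G (n - 1) p))
        rw [hfl, H2 n x (by linarith)]
        rfl
      · have hfl : ⌊x⌋ = n := by
          rw [Int.floor_eq_iff]
          exact ⟨hxn, by push_cast; linarith [hx.2]⟩
        show H ⌊x⌋ x (G ⌊x⌋ p) = H n x (H (n - 1) x (G (n - 1) p))
        have hrec := hGrec (n - 1)
        rw [show (n - 1) + 1 = n by ring] at hrec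
        rw [hfl, hrec]
        congr 1
        rw [Homeomorph.trans_apply, he]
        rw [H3 (n - 1) x (by push_cast; linarith)]
    exact (hΦ.continuousAt).congr
      (Filter.eventuallyEq_of_mem (hopen.mem_nhds hmemU) hagree).symm
  · -- f 0 = id
    funext p
    show H ⌊(0 : ℝ)⌋ 0 (G ⌊(0 : ℝ)⌋ p) = id p
    rw [Int.floor_zero, hG0, H2 0 0 (by norm_num)]
    rfl
  · -- homeomorphisms
    intro x
    exact (H4 ⌊x⌋ x).comp (G ⌊x⌋).isHomeomorph
  · -- pushes z to c x
    intro x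
    show H ⌊x⌋ x (G ⌊x⌋ z) = c x
    rw [Gz]
    exact H5 ⌊x⌋ x ⟨Int.floor_le x, (Int.lt_floor_add_one x).le⟩
  · -- leaf preservation
    intro x p
    exact leaf_chain leaf hpart (Gleaf ⌊x⌋ p) (H6 ⌊x⌋ x _)
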